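/- If X is a nonnegative continuous local martingale on [0,T] with X_0 = x that is a strict local martingale (E_x[X_T] < x), then limsup_{n→∞} n · P(sup_{t∈[0,T]} X_t > n) > 0. -/

import Mathlib

open MeasureTheory ProbabilityTheory Filter Set
open scoped ENNReal NNReal
open scoped Topology

noncomputable section

/-- Standard Brownian motion with respect to a measure `μ`. -/
structure IsBrownianMotion {Ω : Type*} {mΩ : MeasurableSpace Ω} (μ : Measure Ω)
    (W : ℝ → Ω → ℝ) : Prop where
  meas : ∀ t, Measurable (W t)
  init : ∀ᵐ ω ∂μ, W 0 ω = 0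
  cont : ∀ᵐ ω ∂μ, Continuous fun t => W t ω
  incr : ∀ s t : ℝ, 0 ≤ s → s ≤ t →
    μ.map (fun ω => W t ω - W s ω) = gaussianReal 0 (Real.toNNReal (t - s))
  indep : ∀ n : ℕ, ∀ u : ℕ → ℝ, Monotone u → (∀ i, 0 ≤ u i) →
    iIndepFun
      (fun i : Fin n => fun ω => W (u (i + 1)) ω - W (u i) ω) μ

/-- Riemann sum along dyadic partitions approximating the Itô integral `∫_0^t H dW`. -/
def itoSum {Ω : Type*} (H W : ℝ → Ω → ℝ) (t : ℝ) (n : ℕ) (ω : Ω) : ℝ :=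
  ∑ k ∈ Finset.range (2 ^ n),
    H (t * k / 2 ^ n) ω * (W (t * (k + 1) / 2 ^ n) ω - W (t * k / 2 ^ n) ω)

/-- `I` is the Itô integral process `∫_0^t H dW`: the dyadic Riemann sums converge in
probability to `I t` for every `t ≥ 0`. -/
def IsItoIntegral {Ω : Type*} {mΩ : MeasurableSpace Ω} (μ : Measure Ω)
    (H W I : ℝ → Ω → ℝ) : Prop :=
  ∀ t : ℝ, 0 ≤ t → TendstoInMeasure μ (fun n => itoSum H W t n) atTop (I t)

/-- `X` solves the SDE `dX_t = b(X_t) dt + σ(X_t) dW_t`, `X_0 = x₀`. -/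
def SolvesSDE {Ω : Type*} {mΩ : MeasurableSpace Ω} (μ : Measure Ω)
    (W X : ℝ → Ω → ℝ) (b σ : ℝ → ℝ) (x₀ : ℝ) : Prop :=
  (∀ᵐ ω ∂μ, X 0 ω = x₀) ∧
  ∃ I : ℝ → Ω → ℝ, IsItoIntegral μ (fun t ω => σ (X t ω)) W I ∧
    ∀ t : ℝ, 0 ≤ t → ∀ᵐ ω ∂μ, X t ω = x₀ + (∫ s in (0:ℝ)..t, b (X s ω)) + I t ω

/-- A process is a local martingale if there is a localizing sequence of stopping times. -/
def IsLocalMartingale {Ω : Type*} {mΩ : MeasurableSpace Ω} (μ : Measure Ω)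
    (ℱ : Filtration ℝ mΩ) (X : ℝ → Ω → ℝ) : Prop :=
  ∃ τ : ℕ → Ω → ℝ, (∀ n, IsStoppingTime ℱ (fun ω => (τ n ω : WithTop ℝ))) ∧
    (∀ᵐ ω ∂μ, Tendsto (fun n => τ n ω) atTop atTop) ∧
    ∀ n, Martingale (MeasureTheory.stoppedProcess X (fun ω => (τ n ω : WithTop ℝ))) ℱ μ

/-- A process is a (true) martingale on the time interval `[0, T₀]`. -/
def MartingaleOn {Ω : Type*} {mΩ : MeasurableSpace Ω} (μ : Measure Ω)
    (ℱ : Filtration ℝ mΩ) (X : ℝ → Ω → ℝ) (T₀ : ℝ) : Prop :=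
  Adapted ℱ X ∧ (∀ t ∈ Set.Icc (0:ℝ) T₀, Integrable (X t) μ) ∧
  ∀ s t : ℝ, 0 ≤ s → s ≤ t → t ≤ T₀ → μ[X t | ℱ s] =ᵐ[μ] X s

/-- The cumulative distribution function of the standard normal distribution. -/
def stdNormalCDF (z : ℝ) : ℝ := ∫ x in Set.Iic z, gaussianPDFReal 0 1 x

/-- The modified Bessel function of the second kind of imaginary order `iμ`,
via its real integral representation `K_{iμ}(γ) = ∫_0^∞ e^{-γ cosh t} cos(μ t) dt`. -/
def besselKi (m γ : ℝ) : ℝ :=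
  ∫ t in Set.Ioi (0:ℝ), Real.exp (-γ * Real.cosh t) * Real.cos (m * t)

/-- The modified Bessel function of the first kind of real order `l`. -/
def besselI (l x : ℝ) : ℝ :=
  ∑' n : ℕ, (x / 2) ^ (2 * n) * (x / 2) ^ l / (n.factorial * Real.Gamma (n + l + 1))

/-- Kummer's confluent hypergeometric function `M(a, b, z) = ₁F₁(a; b; z)`. -/
def kummerM (a b z : ℝ) : ℝ :=
  ∑' n : ℕ, ((∏ k ∈ Finset.range n, (a + k)) / (∏ k ∈ Finset.range n, (b + k)))
    * z ^ n / n.factorial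

/-- The function `A_c(γ, τ)` from the SABR martingale defect formula. -/
def Ac (γ τ : ℝ) : ℝ :=
  Real.sqrt (2 * γ / Real.pi ^ 3) * Real.exp (-(γ + τ / 8)) *
    ∫ s in Set.Ioi (0:ℝ),
      (8 * s * Real.sinh (Real.pi * s) / (4 * s ^ 2 + 1)) * besselKi s γ *
        Real.exp (-s ^ 2 * τ / 2)

/-- `Y` solves the SDE `dY_t = b(Y_t) dt + σ(Y_t) dW_t`, `Y_0 = y₀`, up to the
(possibly infinite) explosion time `ζ`. -/
def SolvesSDEUpTo {Ω : Type*} {mΩ : MeasurableSpace Ω} (μ : Measure Ω)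
    (W Y : ℝ → Ω → ℝ) (b σ : ℝ → ℝ) (y₀ : ℝ) (ζ : Ω → ℝ≥0∞) : Prop :=
  (∀ᵐ ω ∂μ, Y 0 ω = y₀) ∧
  ∃ I : ℝ → Ω → ℝ,
    (∀ t : ℝ, 0 ≤ t →
      TendstoInMeasure (μ.restrict {ω | ENNReal.ofReal t < ζ ω})
        (fun n => itoSum (fun u ω => σ (Y u ω)) W t n) atTop (I t)) ∧
    ∀ t : ℝ, 0 ≤ t → ∀ᵐ ω ∂μ.restrict {ω | ENNReal.ofReal t < ζ ω},
      Y t ω = y₀ + (∫ s in (0:ℝ)..t, b (Y s ω)) + I t ω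

/-- The first hitting time of zero of a process, as an extended real number. -/
def hitZeroTime {Ω : Type*} (X : ℝ → Ω → ℝ) (ω : Ω) : ℝ≥0∞ :=
  ⨅ (s : {s : ℝ // 0 ≤ s ∧ X s ω = 0}), ENNReal.ofReal s.1

lemma sp_eq {Ω : Type*} (X : ℝ → Ω → ℝ) (τ : Ω → ℝ) (s : ℝ) (ω : Ω) :
    MeasureTheory.stoppedProcess X (fun ω => (τ ω : WithTop ℝ)) s ω = X (min s (τ ω)) ω := by
  simp only [MeasureTheory.stoppedProcess]
  rw [← WithTop.coe_min]
  rfl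


/-- Pathwise hitting time of the open set `{f > a}` within `[0, T]`, capped at `T`. -/
def hitT (f : ℝ → ℝ) (a T : ℝ) : ℝ :=
  sInf ({t | 0 ≤ t ∧ t ≤ T ∧ a < f t} ∪ {T})

namespace hitTAux

variable {f : ℝ → ℝ} {a T : ℝ}

lemma bddBelow_hitset (hT : 0 ≤ T) : BddBelow ({t | 0 ≤ t ∧ t ≤ T ∧ a < f t} ∪ {T}) := by
  refine ⟨0, fun s hs => ?_⟩
  rcases hs with hs | hs
  · exact hs.1
  · simp only [Set.mem_singleton_iff] at hs; exact hs ▸ hT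

lemma hitT_nonneg (hT : 0 ≤ T) : 0 ≤ hitT f a T := by
  refine le_csInf ⟨T, Or.inr rfl⟩ fun s hs => ?_
  rcases hs with hs | hs
  · exact hs.1
  · simp only [Set.mem_singleton_iff] at hs; exact hs ▸ hT

lemma hitT_le_T (hT : 0 ≤ T) : hitT f a T ≤ T :=
  csInf_le (bddBelow_hitset hT) (Or.inr rfl)

lemma hitT_le_of_mem (hT : 0 ≤ T) {s : ℝ} (h0 : 0 ≤ s) (h1 : s ≤ T) (h2 : a < f s) :
    hitT f a T ≤ s :=
  csInf_le (bddBelow_hitset hT) (Or.inl ⟨h0, h1, h2⟩)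

lemma le_hitT {c : ℝ} (hcT : c ≤ T) (h : ∀ s, 0 ≤ s → s ≤ T → a < f s → c ≤ s) :
    c ≤ hitT f a T := by
  refine le_csInf ⟨T, Or.inr rfl⟩ fun s hs => ?_
  rcases hs with hs | hs
  · exact h s hs.1 hs.2.1 hs.2.2
  · simp only [Set.mem_singleton_iff] at hs; exact hs ▸ hcT

/-- Before (and at) the hitting time, `f ≤ a`. -/
lemma apply_hitT_le (hf : Continuous f) (h0 : f 0 < a) (hT : 0 ≤ T) :
    f (hitT f a T) ≤ a := by
  by_contra hgt
  push_neg at hgt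
  set ρ := hitT f a T with hρ
  have hρ0 : 0 ≤ ρ := hitT_nonneg hT
  have hρT : ρ ≤ T := hitT_le_T hT
  rcases eq_or_lt_of_le hρ0 with h | h
  · exact absurd hgt (by rw [← h]; exact not_lt.2 h0.le)
  · -- ρ > 0 : find u ∈ [0, ρ) with f u > a, contradicting minimality
    have hcont : ContinuousAt f ρ := hf.continuousAt
    have : {y | a < f y} ∈ nhds ρ := by
      have : IsOpen {y | a < f y} := isOpen_lt continuous_const hf
      exact this.mem_nhds hgt
    rcases Metric.mem_nhds_iff.1 this with ⟨δ, hδ, hball⟩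
    set u := max (ρ - δ / 2) 0 with hu
    have hu0 : 0 ≤ u := le_max_right _ _
    have huρ : u < ρ := by
      rcases le_or_gt (ρ - δ / 2) 0 with h' | h'
      · simpa [hu, max_eq_right h'] using h
      · rw [hu, max_eq_left h'.le]; linarith
    have hud : u ∈ Metric.ball ρ δ := by
      have h1 : ρ - δ / 2 ≤ u := le_max_left _ _
      rw [Metric.mem_ball, Real.dist_eq, abs_lt]
      constructor <;> linarith
    have hfu : a < f u := hball hud
    have := hitT_le_of_mem hT hu0 (huρ.le.trans hρT) hfu
    rw [← hρ] at this
    linarith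

lemma hitT_eq_T_of_not_exists (hnex : ¬ ∃ t, 0 ≤ t ∧ t ≤ T ∧ a < f t) :
    hitT f a T = T := by
  have : {t | 0 ≤ t ∧ t ≤ T ∧ a < f t} = ∅ := by
    ext t; simp only [Set.mem_setOf_eq, Set.mem_empty_iff_false, iff_false]
    exact fun h => hnex ⟨t, h⟩
  rw [hitT, this, Set.empty_union, csInf_singleton]

/-- If the path exceeds `a` somewhere in `[0,T]`, then `f (hitT) = a`. -/
lemma apply_hitT_eq (hf : Continuous f) (h0 : f 0 < a) (hT : 0 ≤ T)
    (hex : ∃ t, 0 ≤ t ∧ t ≤ T ∧ a < f t) : f (hitT f a T) = a := by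
  obtain ⟨s₀, hs₀⟩ := hex
  set ρ := hitT f a T with hρdef
  refine le_antisymm (apply_hitT_le hf h0 hT) ?_
  by_contra hlt
  push_neg at hlt
  -- f ρ < a. Then f < a on a ball around ρ, so every element of the hit set is ≥ ρ + δ.
  have : {y | f y < a} ∈ nhds ρ := (isOpen_lt hf continuous_const).mem_nhds hlt
  rcases Metric.mem_nhds_iff.1 this with ⟨δ, hδ, hball⟩
  have key : ∀ s, 0 ≤ s → s ≤ T → a < f s → ρ + δ ≤ s := by
    intro s h1 h2 h3
    by_contra hc
    push_neg at hc
    have hsρ : ρ ≤ s := hitT_le_of_mem hT h1 h2 h3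
    have : s ∈ Metric.ball ρ δ := by
      rw [Metric.mem_ball, Real.dist_eq, abs_lt]; constructor <;> linarith
    exact absurd h3 (not_lt.2 (hball this).le)
  -- so hit set ∪ {T} is bounded below by min (ρ + δ) T... then ρ ≥ min (ρ+δ) T forces ρ = T
  have hρT : ρ ≤ T := hitT_le_T hT
  have hs₀ρ : ρ + δ ≤ s₀ := key s₀ hs₀.1 hs₀.2.1 hs₀.2.2
  have hmin : min (ρ + δ) T ≤ ρ := by
    refine le_csInf ⟨T, Or.inr rfl⟩ fun s hs => ?_
    rcases hs with hs | hs
    · exact le_trans (min_le_left _ _) (key s hs.1 hs.2.1 hs.2.2)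
    · simp only [Set.mem_singleton_iff] at hs; exact hs ▸ min_le_right _ _
  have hρeqT : ρ = T := by
    rcases le_or_gt (ρ + δ) T with h' | h'
    · rw [min_eq_left h'] at hmin; linarith
    · rw [min_eq_right h'.le] at hmin; linarith
  -- but s₀ ≤ T = ρ and s₀ ≥ ρ + δ, contradiction
  have : s₀ ≤ ρ := hρeqT ▸ hs₀.2.1
  linarith

/-- Rational witness for exceeding a level, for continuous `f` with `f 0 < a`. -/
lemma exists_rat_witness (hf : Continuous f) (h0 : f 0 < a) {s u : ℝ}
    (hs0 : 0 ≤ s) (hsu : s ≤ u) (hfs : a < f s) :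
    ∃ q : ℚ, 0 ≤ (q : ℝ) ∧ (q : ℝ) ≤ u ∧ a < f q := by
  have hs_pos : 0 < s := by
    rcases eq_or_lt_of_le hs0 with h | h
    · exact absurd hfs (by rw [← h]; exact not_lt.2 h0.le)
    · exact h
  have : {y | a < f y} ∈ nhds s := (isOpen_lt continuous_const hf).mem_nhds hfs
  rcases Metric.mem_nhds_iff.1 this with ⟨δ, hδ, hball⟩
  obtain ⟨q, hq1, hq2⟩ := exists_rat_btwn (show max (s - δ) 0 < s from max_lt (by linarith) hs_pos)
  refine ⟨q, ?_, ?_, ?_⟩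
  · exact le_of_lt (lt_of_le_of_lt (le_max_right _ _) hq1)
  · linarith
  · refine hball ?_
    have h1 : s - δ < (q : ℝ) := lt_of_le_of_lt (le_max_left _ _) hq1
    rw [Metric.mem_ball, Real.dist_eq, abs_lt]
    constructor <;> linarith

end hitTAux



section Grid

variable {Ω : Type*} {mΩ : MeasurableSpace Ω}

/-- Event: the process `M` exceeds `a` at some rational time in `[0, T i/2^m]`. -/
def gridA (M : ℝ → Ω → ℝ) (a T : ℝ) (m i : ℕ) : Set Ω :=
  ⋃ (q : ℚ) (_ : 0 ≤ (q : ℝ) ∧ (q : ℝ) ≤ T * i / 2 ^ m), {ω | a < M q ω}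

/-- First grid index at which the (rational-time) exceedance has happened, capped at `2^m`. -/
def gridIdx (M : ℝ → Ω → ℝ) (a T : ℝ) (m : ℕ) (ω : Ω) : ℕ :=
  sInf {j | j = 2 ^ m ∨ ω ∈ gridA M a T m j}

def gridTime (T : ℝ) (m i : ℕ) : ℝ := T * i / 2 ^ m

/-- The process sampled at the discrete (capped) hitting index. -/
def gridZ (M : ℝ → Ω → ℝ) (a T : ℝ) (m : ℕ) (ω : Ω) : ℝ :=
  M (gridTime T m (gridIdx M a T m ω)) ω

variable {M : ℝ → Ω → ℝ} {a T : ℝ} {m : ℕ}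

lemma gridTime_mono (hT : 0 ≤ T) {i j : ℕ} (hij : i ≤ j) : gridTime T m i ≤ gridTime T m j := by
  unfold gridTime
  have h2 : (0:ℝ) < 2 ^ m := by positivity
  have : (i:ℝ) ≤ (j:ℝ) := by exact_mod_cast hij
  apply div_le_div_of_nonneg_right (mul_le_mul_of_nonneg_left this hT) h2.le

lemma gridTime_nonneg (hT : 0 ≤ T) (i : ℕ) : 0 ≤ gridTime T m i := by
  unfold gridTime; positivity

lemma gridTime_le_T (hT : 0 ≤ T) {i : ℕ} (hi : i ≤ 2 ^ m) : gridTime T m i ≤ T := by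
  unfold gridTime
  rw [div_le_iff₀ (by positivity : (0:ℝ) < 2 ^ m)]
  calc T * i ≤ T * 2 ^ m := mul_le_mul_of_nonneg_left (by exact_mod_cast hi) hT
  _ = T * 2 ^ m := by norm_num

lemma gridTime_zero : gridTime T m 0 = 0 := by simp [gridTime]

lemma gridTime_last : gridTime T m (2 ^ m) = T := by
  rw [gridTime, Nat.cast_pow, Nat.cast_ofNat, mul_div_assoc, div_self (by positivity), mul_one]

lemma gridA_mono (hT : 0 ≤ T) {i j : ℕ} (hij : i ≤ j) :
    gridA M a T m i ⊆ gridA M a T m j := by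
  refine Set.iUnion_mono fun q => Set.iUnion_subset fun hq => ?_
  exact Set.subset_iUnion_of_subset ⟨hq.1, hq.2.trans (gridTime_mono hT hij)⟩ subset_rfl

lemma gridA_measurable {ℱ : Filtration ℝ mΩ} (hAd : Adapted ℱ M) (i : ℕ) :
    MeasurableSet[ℱ (gridTime T m i)] (gridA M a T m i) := by
  refine MeasurableSet.iUnion fun q => MeasurableSet.iUnion fun hq => ?_
  have h1 : MeasurableSet[ℱ (q : ℝ)] {ω | a < M q ω} :=
    measurableSet_lt measurable_const (hAd (q : ℝ))
  exact ℱ.mono hq.2 _ h1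

lemma gridIdx_le (ω : Ω) : gridIdx M a T m ω ≤ 2 ^ m :=
  Nat.sInf_le (Or.inl rfl)

lemma gridIdx_le_iff (hT : 0 ≤ T) {i : ℕ} (hi : i < 2 ^ m) (ω : Ω) :
    gridIdx M a T m ω ≤ i ↔ ω ∈ gridA M a T m i := by
  constructor
  · intro h
    have hne : Set.Nonempty {j | j = 2 ^ m ∨ ω ∈ gridA M a T m j} := ⟨2 ^ m, Or.inl rfl⟩
    have hmem := Nat.sInf_mem hne
    rcases hmem with hmem | hmem
    · exfalso; rw [gridIdx] at h; omega
    · exact gridA_mono hT h hmem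
  · intro h
    exact Nat.sInf_le (Or.inr h)

lemma gridE_measurable {ℱ : Filtration ℝ mΩ} (hT : 0 ≤ T) (hAd : Adapted ℱ M)
    {i : ℕ} (hi : i ≤ 2 ^ m) :
    MeasurableSet[ℱ (gridTime T m i)] {ω | gridIdx M a T m ω = i} := by
  rcases lt_or_eq_of_le hi with hilt | hieq
  · rcases Nat.eq_zero_or_pos i with h0 | hpos
    · subst h0
      have : {ω | gridIdx M a T m ω = 0} = gridA M a T m 0 := by
        ext ω
        rw [Set.mem_setOf_eq, ← Nat.le_zero, gridIdx_le_iff hT hilt]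
      rw [this]; exact gridA_measurable hAd 0
    · have : {ω | gridIdx M a T m ω = i} = gridA M a T m i \ gridA M a T m (i - 1) := by
        ext ω
        rw [Set.mem_setOf_eq, Set.mem_diff, ← gridIdx_le_iff hT hilt,
          ← gridIdx_le_iff hT (by omega)]
        omega
      rw [this]
      exact (gridA_measurable hAd i).diff
        (ℱ.mono (gridTime_mono hT (by omega)) _ (gridA_measurable hAd (i - 1)))
  · subst hieq
    have h1 : (1:ℕ) ≤ 2 ^ m := Nat.one_le_two_pow
    have : {ω | gridIdx M a T m ω = 2 ^ m} = (gridA M a T m (2 ^ m - 1))ᶜ := by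
      ext ω
      rw [Set.mem_setOf_eq, Set.mem_compl_iff, ← gridIdx_le_iff hT (by omega)]
      have := gridIdx_le (M := M) (a := a) (T := T) (m := m) ω
      omega
    rw [this]
    exact (ℱ.mono (gridTime_mono hT (by omega)) _
      (gridA_measurable hAd (2 ^ m - 1))).compl

/-- Partition representation of a sampled process. -/
lemma indicator_grid_rep (B : Set Ω) (F : ℕ → Ω → ℝ) (ω : Ω) :
    B.indicator (fun ω' => F (gridIdx M a T m ω') ω') ω
      = ∑ i ∈ Finset.range (2 ^ m + 1),
          ({ω' | gridIdx M a T m ω' = i} ∩ B).indicator (F i) ω := by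
  by_cases hω : ω ∈ B
  · rw [Set.indicator_of_mem hω]
    rw [Finset.sum_eq_single (gridIdx M a T m ω)]
    · rw [Set.indicator_of_mem (by exact ⟨rfl, hω⟩)]
    · intro j _ hj
      refine Set.indicator_of_notMem (fun hmem => hj ?_) _
      have : gridIdx M a T m ω = j := hmem.1
      omega
    · intro hnot
      exact absurd (Finset.mem_range.2 (Nat.lt_succ_of_le (gridIdx_le ω))) hnot
  · rw [Set.indicator_of_notMem hω]
    refine (Finset.sum_eq_zero fun i _ => ?_).symm
    exact Set.indicator_of_notMem (fun hmem => hω hmem.2) _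

end Grid


section IntegralLemmas

variable {Ω : Type*} {mΩ : MeasurableSpace Ω} {μ : Measure Ω} [IsProbabilityMeasure μ]
variable {ℱ : Filtration ℝ mΩ} {M : ℝ → Ω → ℝ} {a T : ℝ} {m : ℕ}

/-- Optional-stopping identity on the grid: `∫_B Z_m = ∫_B M_T` for `B ∈ ℱ 0`. -/
lemma grid_setIntegral_eq (hM : Martingale M ℱ μ) (hT : 0 < T)
    {B : Set Ω} (hB : MeasurableSet[ℱ 0] B) :
    ∫ ω in B, gridZ M a T m ω ∂μ = ∫ ω in B, M T ω ∂μ := by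
  have hBm : MeasurableSet B := ℱ.le 0 _ hB
  have hEmeas : ∀ i ≤ 2 ^ m, MeasurableSet[ℱ (gridTime T m i)]
      ({ω | gridIdx M a T m ω = i} ∩ B) := fun i hi =>
    (gridE_measurable hT.le hM.stronglyAdapted.adapted hi).inter (ℱ.mono (gridTime_nonneg hT.le i) _ hB)
  have hEm : ∀ i ≤ 2 ^ m, MeasurableSet ({ω | gridIdx M a T m ω = i} ∩ B) := fun i hi =>
    ℱ.le _ _ (hEmeas i hi)
  -- rewrite both sides as sums over the partition
  have hrepZ : ∀ ω, B.indicator (gridZ M a T m) ω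
      = ∑ i ∈ Finset.range (2 ^ m + 1),
          ({ω' | gridIdx M a T m ω' = i} ∩ B).indicator (fun ω' => M (gridTime T m i) ω') ω :=
    fun ω => indicator_grid_rep B (fun i ω' => M (gridTime T m i) ω') ω
  have hrepT : ∀ ω, B.indicator (M T) ω
      = ∑ i ∈ Finset.range (2 ^ m + 1),
          ({ω' | gridIdx M a T m ω' = i} ∩ B).indicator (M T) ω :=
    fun ω => indicator_grid_rep B (fun _ => M T) ω
  calc ∫ ω in B, gridZ M a T m ω ∂μ
      = ∫ ω, B.indicator (gridZ M a T m) ω ∂μ := (integral_indicator hBm).symm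
    _ = ∫ ω, ∑ i ∈ Finset.range (2 ^ m + 1),
          ({ω' | gridIdx M a T m ω' = i} ∩ B).indicator (fun ω' => M (gridTime T m i) ω') ω ∂μ := by
        exact integral_congr_ae (Filter.Eventually.of_forall hrepZ)
    _ = ∑ i ∈ Finset.range (2 ^ m + 1), ∫ ω,
          ({ω' | gridIdx M a T m ω' = i} ∩ B).indicator (fun ω' => M (gridTime T m i) ω') ω ∂μ := by
        refine integral_finset_sum _ fun i hi => ?_
        exact (hM.integrable _).indicator (hEm i (by simpa using Nat.lt_succ_iff.1 (Finset.mem_range.1 hi)))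
    _ = ∑ i ∈ Finset.range (2 ^ m + 1), ∫ ω,
          ({ω' | gridIdx M a T m ω' = i} ∩ B).indicator (M T) ω ∂μ := by
        refine Finset.sum_congr rfl fun i hi => ?_
        have hi' : i ≤ 2 ^ m := Nat.lt_succ_iff.1 (Finset.mem_range.1 hi)
        rw [integral_indicator (hEm i hi'), integral_indicator (hEm i hi')]
        have hcond := hM.condExp_ae_eq (gridTime_le_T hT.le hi')
        calc ∫ ω in {ω' | gridIdx M a T m ω' = i} ∩ B, M (gridTime T m i) ω ∂μ
            = ∫ ω in {ω' | gridIdx M a T m ω' = i} ∩ B, (μ[M T|ℱ (gridTime T m i)]) ω ∂μ := by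
              refine setIntegral_congr_ae (hEm i hi') ?_
              filter_upwards [hcond] with ω hω _ using hω.symm
          _ = ∫ ω in {ω' | gridIdx M a T m ω' = i} ∩ B, M T ω ∂μ :=
              setIntegral_condExp (ℱ.le _) (hM.integrable T) (hEmeas i hi')
    _ = ∫ ω, ∑ i ∈ Finset.range (2 ^ m + 1),
          ({ω' | gridIdx M a T m ω' = i} ∩ B).indicator (M T) ω ∂μ := by
        refine (integral_finset_sum _ fun i hi => ?_).symm
        exact (hM.integrable T).indicator (hEm i (Nat.lt_succ_iff.1 (Finset.mem_range.1 hi)))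
    _ = ∫ ω, B.indicator (M T) ω ∂μ := integral_congr_ae (Filter.Eventually.of_forall fun ω => (hrepT ω).symm)
    _ = ∫ ω in B, M T ω ∂μ := integral_indicator hBm

/-- Overshoot control: `∫ (Z_m - c)⁺ ≤ ∫ (M_T - c)⁺`. -/
lemma grid_posPart_le (hM : Martingale M ℱ μ) (hT : 0 < T) (c : ℝ) :
    ∫ ω, max (gridZ M a T m ω - c) 0 ∂μ ≤ ∫ ω, max (M T ω - c) 0 ∂μ := by
  have hEmeas : ∀ i ≤ 2 ^ m, MeasurableSet[ℱ (gridTime T m i)]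
      {ω | gridIdx M a T m ω = i} := fun i hi => gridE_measurable hT.le hM.stronglyAdapted.adapted hi
  have hEm : ∀ i ≤ 2 ^ m, MeasurableSet {ω | gridIdx M a T m ω = i} := fun i hi =>
    ℱ.le _ _ (hEmeas i hi)
  set g : Ω → ℝ := fun ω => max (M T ω - c) 0 with hg
  have hgint : Integrable g μ := ((hM.integrable T).sub (integrable_const c)).pos_part
  -- pointwise inequality against the conditional expectation, for each grid time
  have key : ∀ i, i ≤ 2 ^ m → (fun ω => max (M (gridTime T m i) ω - c) 0)
      ≤ᵐ[μ] μ[g|ℱ (gridTime T m i)] := by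
    intro i hi
    have hcond := hM.condExp_ae_eq (gridTime_le_T hT.le hi)
    have hsub : μ[M T - (fun _ => c)|ℱ (gridTime T m i)]
        =ᵐ[μ] fun ω => (μ[M T|ℱ (gridTime T m i)]) ω - c := by
      have h1 := condExp_sub (μ := μ) (m := ℱ (gridTime T m i)) (hM.integrable T) (integrable_const c)
      have h2 := condExp_const (ℱ.le (gridTime T m i)) c (μ := μ)
      filter_upwards [h1] with ω hω
      rw [hω, Pi.sub_apply, congrFun h2 ω]
    have hmono : μ[M T - (fun _ => c)|ℱ (gridTime T m i)] ≤ᵐ[μ] μ[g|ℱ (gridTime T m i)] := by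
      refine condExp_mono ((hM.integrable T).sub (integrable_const c)) hgint ?_
      refine Filter.Eventually.of_forall fun ω => ?_
      rw [Pi.sub_apply]
      exact le_max_left _ _
    have hnonneg : (0 : Ω → ℝ) ≤ᵐ[μ] μ[g|ℱ (gridTime T m i)] :=
      condExp_nonneg (Filter.Eventually.of_forall fun ω => le_max_right _ _)
    filter_upwards [hcond, hsub, hmono, hnonneg] with ω h1 h2 h3 h4
    have h5 : M (gridTime T m i) ω - c ≤ (μ[g|ℱ (gridTime T m i)]) ω := by
      have : (μ[M T - (fun _ => c)|ℱ (gridTime T m i)]) ω = M (gridTime T m i) ω - c := by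
        rw [h2, h1]
      rw [← this]; exact h3
    rw [max_le_iff]
    exact ⟨h5, h4⟩
  -- decompose over the partition
  have hrepZ : ∀ ω, max (gridZ M a T m ω - c) 0
      = ∑ i ∈ Finset.range (2 ^ m + 1),
          ({ω' | gridIdx M a T m ω' = i}).indicator (fun ω' => max (M (gridTime T m i) ω' - c) 0) ω := by
    intro ω
    have := indicator_grid_rep (M := M) (a := a) (T := T) (m := m) Set.univ
      (fun i ω' => max (M (gridTime T m i) ω' - c) 0) ω
    simpa [Set.indicator_univ, Set.inter_univ, gridZ] using this
  have hrepg : ∀ ω, g ω = ∑ i ∈ Finset.range (2 ^ m + 1),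
      ({ω' | gridIdx M a T m ω' = i}).indicator g ω := by
    intro ω
    have := indicator_grid_rep (M := M) (a := a) (T := T) (m := m) Set.univ (fun _ => g) ω
    simpa [Set.indicator_univ, Set.inter_univ] using this
  calc ∫ ω, max (gridZ M a T m ω - c) 0 ∂μ
      = ∑ i ∈ Finset.range (2 ^ m + 1), ∫ ω,
          ({ω' | gridIdx M a T m ω' = i}).indicator (fun ω' => max (M (gridTime T m i) ω' - c) 0) ω ∂μ := by
        rw [integral_congr_ae (Filter.Eventually.of_forall hrepZ)]
        refine integral_finset_sum _ fun i hi => ?_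
        exact (((hM.integrable _).sub (integrable_const c)).pos_part).indicator
          (hEm i (Nat.lt_succ_iff.1 (Finset.mem_range.1 hi)))
    _ ≤ ∑ i ∈ Finset.range (2 ^ m + 1), ∫ ω,
          ({ω' | gridIdx M a T m ω' = i}).indicator g ω ∂μ := by
        refine Finset.sum_le_sum fun i hi => ?_
        have hi' : i ≤ 2 ^ m := Nat.lt_succ_iff.1 (Finset.mem_range.1 hi)
        rw [integral_indicator (hEm i hi'), integral_indicator (hEm i hi')]
        calc ∫ ω in {ω' | gridIdx M a T m ω' = i}, max (M (gridTime T m i) ω - c) 0 ∂μ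
            ≤ ∫ ω in {ω' | gridIdx M a T m ω' = i}, (μ[g|ℱ (gridTime T m i)]) ω ∂μ := by
              refine setIntegral_mono_ae ?_ ?_ (key i hi')
              · exact (((hM.integrable _).sub (integrable_const c)).pos_part).integrableOn
              · exact integrable_condExp.integrableOn
          _ = ∫ ω in {ω' | gridIdx M a T m ω' = i}, g ω ∂μ :=
              setIntegral_condExp (ℱ.le _) hgint (hEmeas i hi')
    _ = ∫ ω, g ω ∂μ := by
        rw [← integral_finset_sum _ fun i hi => hgint.indicator
          (hEm i (Nat.lt_succ_iff.1 (Finset.mem_range.1 hi)))]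
        exact integral_congr_ae (Filter.Eventually.of_forall fun ω => (hrepg ω).symm)

end IntegralLemmas


section Conv

variable {Ω : Type*} {mΩ : MeasurableSpace Ω}
variable {M : ℝ → Ω → ℝ} {a T : ℝ}

/-- On a path where `M · ω` is continuous and starts below `a`, the grid sample converges to
the value at the (capped) hitting time. -/
lemma gridZ_tendsto {ω : Ω} (hf : Continuous fun t => M t ω) (h0 : M 0 ω < a) (hT : 0 < T) :
    Tendsto (fun m => gridZ M a T m ω) atTop (𝓝 (M (hitT (fun t => M t ω) a T) ω)) := by
  classical
  set f : ℝ → ℝ := fun t => M t ω with hfdef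
  set ρ := hitT f a T with hρdef
  have hρ0 : 0 ≤ ρ := hitTAux.hitT_nonneg hT.le
  have hρT : ρ ≤ T := hitTAux.hitT_le_T hT.le
  -- the event ↔ real hitting characterization
  have hA_iff : ∀ m j, ω ∈ gridA M a T m j ↔
      ∃ s, 0 ≤ s ∧ s ≤ gridTime T m j ∧ a < f s := by
    intro m j
    constructor
    · intro hmem
      simp only [gridA, Set.mem_iUnion] at hmem
      obtain ⟨q, hq, hq2⟩ := hmem
      exact ⟨(q : ℝ), hq.1, hq.2, hq2⟩
    · rintro ⟨s, hs0, hsle, hfs⟩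
      obtain ⟨q, hq0, hqle, hq⟩ := hitTAux.exists_rat_witness hf h0 hs0 hsle hfs
      simp only [gridA, Set.mem_iUnion]
      exact ⟨q, ⟨hq0, hqle⟩, hq⟩
  -- distance bound
  have hdist : ∀ m, |gridTime T m (gridIdx M a T m ω) - ρ| ≤ T / 2 ^ m := by
    intro m
    set i := gridIdx M a T m ω with hidef
    have hiN : i ≤ 2 ^ m := gridIdx_le ω
    have hgap : ∀ j : ℕ, 1 ≤ j → gridTime T m j - gridTime T m (j - 1) = T / 2 ^ m := by
      intro j hj
      unfold gridTime
      have : ((j - 1 : ℕ) : ℝ) = (j : ℝ) - 1 := by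
        rw [Nat.cast_sub hj]; norm_num
      rw [this]
      field_simp
      ring
    have hlower : ∀ j : ℕ, j < 2 ^ m → ω ∉ gridA M a T m j → gridTime T m j ≤ ρ := by
      intro j hjN hnot
      refine hitTAux.le_hitT (gridTime_le_T hT.le hjN.le) fun s hs0 hsT hfs => ?_
      by_contra hc
      push_neg at hc
      exact hnot ((hA_iff m j).2 ⟨s, hs0, hc.le, hfs⟩)
    rcases lt_or_eq_of_le hiN with hilt | hieq
    · -- i < 2^m : ω ∈ gridA i
      have hmem : ω ∈ gridA M a T m i := (gridIdx_le_iff hT.le hilt ω).1 le_rfl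
      obtain ⟨s, hs0, hsle, hfs⟩ := (hA_iff m i).1 hmem
      have hρle : ρ ≤ gridTime T m i :=
        le_trans (hitTAux.hitT_le_of_mem hT.le hs0 (hsle.trans (gridTime_le_T hT.le hilt.le)) hfs) hsle
      have hipos : 1 ≤ i := by
        by_contra hc
        push_neg at hc
        interval_cases i
        · obtain ⟨s', hs0', hsle', hfs'⟩ := (hA_iff m 0).1 hmem
          rw [gridTime_zero] at hsle'
          have : s' = 0 := le_antisymm hsle' hs0'
          rw [this] at hfs'
          exact absurd hfs' (not_lt.2 h0.le)
      have hnot : ω ∉ gridA M a T m (i - 1) := by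
        intro hmem'
        have := (gridIdx_le_iff hT.le (by omega) ω).2 hmem'
        omega
      have hge : gridTime T m (i - 1) ≤ ρ := hlower (i - 1) (by omega) hnot
      rw [abs_le]
      constructor
      · have := hgap i hipos; linarith
      · linarith [gridTime_mono (T:=T) (m:=m) hT.le (Nat.sub_le i 1),
          hgap i hipos]
    · -- i = 2^m
      have h1 : (1:ℕ) ≤ 2 ^ m := Nat.one_le_two_pow
      have hnot : ω ∉ gridA M a T m (2 ^ m - 1) := by
        intro hmem'
        have := (gridIdx_le_iff hT.le (by omega) ω).2 hmem'
        omega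
      have hge : gridTime T m (2 ^ m - 1) ≤ ρ := hlower _ (by omega) hnot
      rw [hieq, gridTime_last, abs_le]
      have := hgap (2 ^ m) h1
      rw [gridTime_last] at this
      constructor
      · linarith
      · linarith
  -- grid times converge to ρ
  have htimes : Tendsto (fun m => gridTime T m (gridIdx M a T m ω)) atTop (𝓝 ρ) := by
    rw [tendsto_iff_dist_tendsto_zero]
    have hb : Tendsto (fun m : ℕ => T / 2 ^ m) atTop (𝓝 0) := by
      rw [show (0:ℝ) = T * 0 by ring]
      simp_rw [div_eq_mul_inv]
      exact Tendsto.const_mul T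
        (tendsto_inv_atTop_zero.comp (tendsto_pow_atTop_atTop_of_one_lt (by norm_num : (1:ℝ) < 2)))
    refine squeeze_zero (g := fun m : ℕ => T / 2 ^ m) (fun m => dist_nonneg) (fun m => ?_) hb
    exact (Real.dist_eq _ _).trans_le (hdist m)
  exact (hf.tendsto ρ).comp htimes

end Conv


section Key2

variable {Ω : Type*} {mΩ : MeasurableSpace Ω} {μ : Measure Ω} [IsProbabilityMeasure μ]
variable {ℱ : Filtration ℝ mΩ} {M : ℝ → Ω → ℝ} {a T : ℝ}

/-- Optional stopping identity at the continuous (capped) hitting time of level `a`: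
`∫_B M_{T ∧ σ_a} = ∫_B M_T` for `B ∈ ℱ 0`. -/
lemma stopped_setIntegral_eq (hM : Martingale M ℱ μ) (hT : 0 < T) (ha : 0 < a)
    {B : Set Ω} (hB : MeasurableSet[ℱ 0] B)
    (hpath : ∀ᵐ ω ∂μ, ω ∈ B → Continuous (fun t => M t ω) ∧ M 0 ω < a)
    (hnn : ∀ᵐ ω ∂μ, ∀ t, 0 ≤ M t ω) :
    AEStronglyMeasurable (B.indicator (fun ω' => M (hitT (fun t => M t ω') a T) ω')) μ ∧
    ∫ ω, B.indicator (fun ω' => M (hitT (fun t => M t ω') a T) ω') ω ∂μ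
      = ∫ ω in B, M T ω ∂μ := by
  classical
  have hBm : MeasurableSet B := ℱ.le 0 _ hB
  set Zinf : Ω → ℝ := B.indicator (fun ω' => M (hitT (fun t => M t ω') a T) ω') with hZinf
  set ZB : ℕ → Ω → ℝ := fun m => B.indicator (gridZ M a T m) with hZB
  -- integrability of the grid samples
  have hZB_int : ∀ m, Integrable (ZB m) μ := by
    intro m
    have hrep : ZB m = fun ω => ∑ i ∈ Finset.range (2 ^ m + 1),
        ({ω' | gridIdx M a T m ω' = i} ∩ B).indicator (fun ω' => M (gridTime T m i) ω') ω :=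
      funext fun ω => indicator_grid_rep B (fun i ω' => M (gridTime T m i) ω') ω
    rw [hrep]
    refine integrable_finset_sum _ fun i hi => ?_
    have hi' : i ≤ 2 ^ m := Nat.lt_succ_iff.1 (Finset.mem_range.1 hi)
    refine (hM.integrable _).indicator (ℱ.le (gridTime T m i) _ ?_)
    exact (gridE_measurable hT.le hM.stronglyAdapted.adapted hi').inter (ℱ.mono (gridTime_nonneg hT.le i) _ hB)
  -- a.e. pointwise convergence ZB m → Zinf
  have hconv : ∀ᵐ ω ∂μ, Tendsto (fun m => ZB m ω) atTop (𝓝 (Zinf ω)) := by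
    filter_upwards [hpath] with ω hω
    by_cases hmem : ω ∈ B
    · obtain ⟨hc, h0⟩ := hω hmem
      simp only [hZB, hZinf, Set.indicator_of_mem hmem]
      exact gridZ_tendsto hc h0 hT
    · simp only [hZB, hZinf, Set.indicator_of_notMem hmem]
      exact tendsto_const_nhds
  -- a.e. bounds
  have hZB_nn : ∀ m, ∀ᵐ ω ∂μ, 0 ≤ ZB m ω := by
    intro m
    filter_upwards [hnn] with ω hω
    by_cases hmem : ω ∈ B
    · simp only [hZB, Set.indicator_of_mem hmem]; exact hω _
    · simp only [hZB, Set.indicator_of_notMem hmem]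
      exact le_refl 0
  have hZinf_bdd : ∀ᵐ ω ∂μ, 0 ≤ Zinf ω ∧ Zinf ω ≤ a := by
    filter_upwards [hpath, hnn] with ω hω hω'
    by_cases hmem : ω ∈ B
    · obtain ⟨hc, h0⟩ := hω hmem
      simp only [hZinf, Set.indicator_of_mem hmem]
      exact ⟨hω' _, hitTAux.apply_hitT_le hc h0 hT.le⟩
    · simp only [hZinf, Set.indicator_of_notMem hmem]
      exact ⟨le_refl 0, ha.le⟩
  have hZinf_meas : AEStronglyMeasurable Zinf μ :=
    aestronglyMeasurable_of_tendsto_ae atTop (fun m => (hZB_int m).aestronglyMeasurable) hconv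
  have hZinf_int : Integrable Zinf μ := by
    refine ⟨hZinf_meas, HasFiniteIntegral.of_bounded (C := a) ?_⟩
    filter_upwards [hZinf_bdd] with ω hω
    rw [Real.norm_eq_abs, abs_le]
    exact ⟨by linarith [hω.1, ha.le], hω.2⟩
  -- the tail integrals of M T vanish
  have htail : Tendsto (fun j : ℕ => ∫ ω, max (M T ω - j) 0 ∂μ) atTop (𝓝 0) := by
    have key : Tendsto (fun j : ℕ => ∫ ω, max (M T ω - j) 0 ∂μ) atTop (𝓝 (∫ _ : Ω, (0:ℝ) ∂μ)) := by
      refine tendsto_integral_of_dominated_convergence (fun ω => |M T ω|)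
        (fun j => (((hM.integrable T).sub (integrable_const ((j:ℝ)))).aestronglyMeasurable.aemeasurable.max
          aemeasurable_const).aestronglyMeasurable)
        (hM.integrable T).abs ?_ ?_
      · intro j
        refine Filter.Eventually.of_forall fun ω => ?_
        rw [Real.norm_eq_abs, abs_of_nonneg (le_max_right _ _)]
        rcases le_or_gt (M T ω) (j : ℝ) with h | h
        · rw [max_eq_right (by linarith)]; positivity
        · rw [max_eq_left (by linarith)]
          have : (0:ℝ) ≤ j := Nat.cast_nonneg j
          calc M T ω - j ≤ M T ω := by linarith
          _ ≤ |M T ω| := le_abs_self _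
      · refine Filter.Eventually.of_forall fun ω => ?_
        refine tendsto_nhds_of_eventually_eq ?_
        filter_upwards [Filter.eventually_ge_atTop ⌈M T ω⌉₊] with j hj
        have : M T ω ≤ (j : ℝ) := le_trans (Nat.le_ceil _) (by exact_mod_cast hj)
        rw [max_eq_right (by linarith)]
    simpa using key
  -- main limit: ∫ ZB m → ∫ Zinf
  have hmain : Tendsto (fun m => ∫ ω, ZB m ω ∂μ) atTop (𝓝 (∫ ω, Zinf ω ∂μ)) := by
    rw [Metric.tendsto_atTop]
    intro ε hε
    -- choose truncation level c = j ≥ a with small tail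
    obtain ⟨j₀, hj₀⟩ := (Metric.tendsto_atTop.1 htail) (ε / 3) (by linarith)
    set j : ℕ := max j₀ ⌈a⌉₊ with hjdef
    have hja : a ≤ (j : ℝ) := le_trans (Nat.le_ceil a) (by exact_mod_cast le_max_right j₀ ⌈a⌉₊)
    have hj0 : (0:ℝ) ≤ (j:ℝ) := Nat.cast_nonneg _
    have htail_j : ∫ ω, max (M T ω - j) 0 ∂μ < ε / 3 := by
      have := hj₀ j (le_max_left _ _)
      rw [Real.dist_eq, sub_zero] at this
      calc ∫ ω, max (M T ω - j) 0 ∂μ ≤ |∫ ω, max (M T ω - j) 0 ∂μ| := le_abs_self _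
      _ < ε / 3 := this
    -- DCT for the truncated parts
    have hDCT : Tendsto (fun m => ∫ ω, |min (ZB m ω) j - min (Zinf ω) j| ∂μ) atTop (𝓝 0) := by
      have key : Tendsto (fun m => ∫ ω, |min (ZB m ω) j - min (Zinf ω) j| ∂μ) atTop
          (𝓝 (∫ _ : Ω, (0:ℝ) ∂μ)) := by
        refine tendsto_integral_of_dominated_convergence (fun _ => (j:ℝ))
          (fun m => ?_) (integrable_const _) (fun m => ?_) ?_
        · exact ((((hZB_int m).aestronglyMeasurable.aemeasurable.min aemeasurable_const).sub
            (hZinf_meas.aemeasurable.min aemeasurable_const)).aestronglyMeasurable).norm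
        · filter_upwards [hZB_nn m, hZinf_bdd] with ω h1 h2
          rw [Real.norm_eq_abs, abs_abs, abs_le]
          have e1 : 0 ≤ min (ZB m ω) (j:ℝ) := le_min h1 hj0
          have e2 : min (ZB m ω) (j:ℝ) ≤ j := min_le_right _ _
          have e3 : 0 ≤ min (Zinf ω) (j:ℝ) := le_min h2.1 hj0
          have e4 : min (Zinf ω) (j:ℝ) ≤ j := min_le_right _ _
          constructor <;> linarith
        · filter_upwards [hconv] with ω hω
          have : Tendsto (fun m => |min (ZB m ω) j - min (Zinf ω) j|) atTop
              (𝓝 |min (Zinf ω) j - min (Zinf ω) j|) := by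
            exact ((hω.min tendsto_const_nhds).sub tendsto_const_nhds).abs
          simpa using this
      simpa using key
    obtain ⟨m₀, hm₀⟩ := (Metric.tendsto_atTop.1 hDCT) (ε / 3) (by linarith)
    refine ⟨m₀, fun m hm => ?_⟩
    have hDm := hm₀ m hm
    rw [Real.dist_eq, sub_zero] at hDm
    have hDm' : ∫ ω, |min (ZB m ω) j - min (Zinf ω) j| ∂μ < ε / 3 :=
      lt_of_abs_lt hDm
    -- pointwise: |ZB - Zinf| ≤ |min ZB j - min Zinf j| + (ZB - j)⁺
    have hpt : ∀ᵐ ω ∂μ, |ZB m ω - Zinf ω|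
        ≤ |min (ZB m ω) j - min (Zinf ω) j| + max (ZB m ω - j) 0 := by
      filter_upwards [hZinf_bdd] with ω h2
      have hvj : Zinf ω ≤ j := le_trans h2.2 hja
      rcases le_or_gt (ZB m ω) (j:ℝ) with h | h
      · rw [min_eq_left h, min_eq_left hvj]
        have : max (ZB m ω - j) 0 = 0 := max_eq_right (by linarith)
        rw [this]; simp
      · rw [min_eq_right h.le, min_eq_left hvj]
        have h3 : max (ZB m ω - j) 0 = ZB m ω - j := max_eq_left (by linarith)
        rw [h3, abs_of_nonneg (by linarith : (0:ℝ) ≤ (j:ℝ) - Zinf ω)]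
        rw [abs_le]
        constructor <;> [linarith [abs_nonneg (ZB m ω - Zinf ω)]; skip]
        · linarith
    have hint1 : Integrable (fun ω => |min (ZB m ω) j - min (Zinf ω) j|) μ := by
      refine ⟨((((hZB_int m).aestronglyMeasurable.aemeasurable.min aemeasurable_const).sub
          (hZinf_meas.aemeasurable.min aemeasurable_const)).aestronglyMeasurable).norm, ?_⟩
      refine HasFiniteIntegral.of_bounded (C := (j:ℝ)) ?_
      filter_upwards [hZB_nn m, hZinf_bdd] with ω h1 h2
      rw [Real.norm_eq_abs, abs_abs, abs_le]
      have e1 : 0 ≤ min (ZB m ω) (j:ℝ) := le_min h1 hj0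
      have e2 : min (ZB m ω) (j:ℝ) ≤ j := min_le_right _ _
      have e3 : 0 ≤ min (Zinf ω) (j:ℝ) := le_min h2.1 hj0
      have e4 : min (Zinf ω) (j:ℝ) ≤ j := min_le_right _ _
      constructor <;> linarith
    have hint2 : Integrable (fun ω => max (ZB m ω - j) 0) μ :=
      ((hZB_int m).sub (integrable_const _)).pos_part
    have hle : |∫ ω, ZB m ω ∂μ - ∫ ω, Zinf ω ∂μ| ≤ ε / 3 + ε / 3 := by
      rw [← integral_sub (hZB_int m) hZinf_int]
      calc |∫ ω, (ZB m ω - Zinf ω) ∂μ| ≤ ∫ ω, |ZB m ω - Zinf ω| ∂μ := by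
            simpa [Real.norm_eq_abs] using
              norm_integral_le_integral_norm (fun ω => ZB m ω - Zinf ω) (μ := μ)
        _ ≤ ∫ ω, (|min (ZB m ω) j - min (Zinf ω) j| + max (ZB m ω - j) 0) ∂μ := by
            refine integral_mono_ae ((hZB_int m).sub hZinf_int).abs (hint1.add hint2) hpt
        _ = ∫ ω, |min (ZB m ω) j - min (Zinf ω) j| ∂μ + ∫ ω, max (ZB m ω - j) 0 ∂μ :=
            integral_add hint1 hint2
        _ ≤ ∫ ω, |min (ZB m ω) j - min (Zinf ω) j| ∂μ + ∫ ω, max (M T ω - j) 0 ∂μ := by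
            have hb : ∫ ω, max (gridZ M a T m ω - j) 0 ∂μ ≤ ∫ ω, max (M T ω - j) 0 ∂μ :=
              grid_posPart_le hM hT (j : ℝ)
            -- but ZB m = indicator B gridZ; (ZB - j)⁺ ≤ (gridZ - j)⁺ a.e. since gridZ ≥ 0 a.e.
            have hmono : ∫ ω, max (ZB m ω - j) 0 ∂μ ≤ ∫ ω, max (gridZ M a T m ω - j) 0 ∂μ := by
              refine integral_mono_ae hint2 ?_ ?_
              · have : Integrable (gridZ M a T m) μ := by
                  have hrep : gridZ M a T m = fun ω => ∑ i ∈ Finset.range (2 ^ m + 1),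
                      ({ω' | gridIdx M a T m ω' = i} ∩ Set.univ).indicator
                        (fun ω' => M (gridTime T m i) ω') ω := by
                    funext ω
                    have := indicator_grid_rep (M := M) (a := a) (T := T) (m := m) Set.univ
                      (fun i ω' => M (gridTime T m i) ω') ω
                    simpa [Set.indicator_univ, gridZ] using this
                  rw [hrep]
                  refine integrable_finset_sum _ fun i hi => ?_
                  have hi' : i ≤ 2 ^ m := Nat.lt_succ_iff.1 (Finset.mem_range.1 hi)
                  refine (hM.integrable _).indicator ?_
                  rw [Set.inter_univ]
                  exact ℱ.le (gridTime T m i) _ (gridE_measurable hT.le hM.stronglyAdapted.adapted hi')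
                exact (this.sub (integrable_const _)).pos_part
              · filter_upwards [hnn] with ω hω
                by_cases hmem : ω ∈ B
                · simp only [hZB, Set.indicator_of_mem hmem]
                  exact le_refl _
                · simp only [hZB, Set.indicator_of_notMem hmem]
                  have : (0:ℝ) ≤ gridZ M a T m ω := hω _
                  have h1 : max (0 - (j:ℝ)) 0 = 0 := max_eq_right (by linarith)
                  rw [h1]
                  exact le_max_right _ _
            linarith
        _ ≤ ε / 3 + ε / 3 := by
            have := htail_j
            linarith [hDm']
    rw [Real.dist_eq]
    calc |∫ ω, ZB m ω ∂μ - ∫ ω, Zinf ω ∂μ| ≤ ε / 3 + ε / 3 := hle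
    _ < ε := by linarith
  -- but ∫ ZB m is constant in m
  have hconst : ∀ m, ∫ ω, ZB m ω ∂μ = ∫ ω in B, M T ω ∂μ := by
    intro m
    rw [hZB]
    rw [integral_indicator hBm]
    exact grid_setIntegral_eq hM hT hB
  have : Tendsto (fun _ : ℕ => ∫ ω in B, M T ω ∂μ) atTop (𝓝 (∫ ω, Zinf ω ∂μ)) := by
    refine hmain.congr fun m => hconst m
  exact ⟨hZinf_meas, tendsto_nhds_unique this tendsto_const_nhds⟩

end Key2


section Key3

variable {Ω : Type*} {mΩ : MeasurableSpace Ω} {μ : Measure Ω} [IsProbabilityMeasure μ]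
variable {ℱ : Filtration ℝ mΩ}

/-- The fundamental identity: for a continuous nonnegative local martingale started at `x < a`,
the value at the capped hitting time of level `a` has expectation exactly `x`. -/
lemma integral_hit_eq
    (X : ℝ → Ω → ℝ) (τ : ℕ → Ω → ℝ)
    (hstop : ∀ k, IsStoppingTime ℱ (fun ω => (τ k ω : WithTop ℝ)))
    (htend : ∀ᵐ ω ∂μ, Tendsto (fun k => τ k ω) atTop atTop)
    (hmart : ∀ k, Martingale (MeasureTheory.stoppedProcess X (fun ω => (τ k ω : WithTop ℝ))) ℱ μ)
    (hnn : ∀ᵐ ω ∂μ, ∀ t : ℝ, 0 ≤ X t ω)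
    (hcont : ∀ᵐ ω ∂μ, Continuous fun t => X t ω)
    {x : ℝ} (h0 : ∀ᵐ ω ∂μ, X 0 ω = x)
    {a T : ℝ} (hx : 0 < x) (hxa : x < a) (hT : 0 < T) :
    AEStronglyMeasurable (fun ω => X (hitT (fun t => X t ω) a T) ω) μ ∧
    ∫ ω, X (hitT (fun t => X t ω) a T) ω ∂μ = x := by
  classical
  set M : ℕ → ℝ → Ω → ℝ := fun k => MeasureTheory.stoppedProcess X (fun ω => (τ k ω : WithTop ℝ)) with hM
  set B : ℕ → Set Ω := fun k => {ω | 0 < τ k ω} with hBdef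
  have hB0 : ∀ k, MeasurableSet[ℱ 0] (B k) := by
    intro k
    have : B k = {ω | (τ k ω : WithTop ℝ) ≤ ((0:ℝ) : WithTop ℝ)}ᶜ := by
      ext ω; simp [hBdef, not_le]
    rw [this]
    exact ((hstop k) 0).compl
  have hBm : ∀ k, MeasurableSet (B k) := fun k => ℱ.le 0 _ (hB0 k)
  set V : Ω → ℝ := fun ω => X (hitT (fun t => X t ω) a T) ω with hV
  set W : ℕ → Ω → ℝ := fun k => (B k).indicator
    (fun ω' => M k (hitT (fun t => M k t ω') a T) ω') with hW
  have ha : 0 < a := hx.trans hxa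
  -- identity for each k via optional stopping
  have hWkey : ∀ k, AEStronglyMeasurable (W k) μ ∧
      ∫ ω, W k ω ∂μ = ∫ ω in B k, M k T ω ∂μ := by
    intro k
    refine stopped_setIntegral_eq (hmart k) hT ha (hB0 k) ?_ ?_
    · filter_upwards [hcont, h0] with ω hc h0'
      intro hmem
      have hτpos : 0 < τ k ω := hmem
      constructor
      · rw [show (fun t => M k t ω) = fun t => X (min t (τ k ω)) ω from
          funext fun t => sp_eq X (τ k) t ω]
        exact hc.comp (continuous_id.min continuous_const)
      · have heq : M k 0 ω = X 0 ω := by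
          rw [show M k 0 ω = X (min 0 (τ k ω)) ω from sp_eq X (τ k) 0 ω, min_eq_left hτpos.le]
        show M k 0 ω < a
        rw [heq, h0']
        exact hxa
    · filter_upwards [hnn] with ω hω
      intro t
      exact hω _
  -- ∫_{B k} M k T = x * μ (B k)
  have hBint : ∀ k, ∫ ω in B k, M k T ω ∂μ = (μ (B k)).toReal * x := by
    intro k
    have h1 : ∫ ω in B k, M k T ω ∂μ = ∫ ω in B k, (μ[M k T|ℱ 0]) ω ∂μ :=
      (setIntegral_condExp (ℱ.le 0) ((hmart k).integrable T) (hB0 k)).symm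
    have h2 : ∫ ω in B k, (μ[M k T|ℱ 0]) ω ∂μ = ∫ ω in B k, M k 0 ω ∂μ := by
      refine setIntegral_congr_ae (hBm k) ?_
      filter_upwards [(hmart k).condExp_ae_eq (le_of_lt hT)] with ω hω _ using hω
    have h3 : ∫ ω in B k, M k 0 ω ∂μ = ∫ ω in B k, x ∂μ := by
      refine setIntegral_congr_ae (hBm k) ?_
      filter_upwards [h0] with ω h0' hmem
      have hτpos : 0 < τ k ω := hmem
      rw [show M k 0 ω = X (min 0 (τ k ω)) ω from sp_eq X (τ k) 0 ω]
      show X (min 0 (τ k ω)) ω = x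
      rw [min_eq_left hτpos.le]
      exact h0'
    rw [h1, h2, h3, setIntegral_const, smul_eq_mul, measureReal_def]
  -- a.e. convergence W k → V
  have hconv : ∀ᵐ ω ∂μ, Tendsto (fun k => W k ω) atTop (𝓝 (V ω)) := by
    filter_upwards [htend] with ω hω
    refine Tendsto.congr' ?_ (tendsto_const_nhds (x := V ω))
    have : ∀ᶠ k in atTop, max T 0 < τ k ω := hω.eventually (eventually_gt_atTop (max T 0))
    filter_upwards [this] with k hk
    have hτT : T < τ k ω := lt_of_le_of_lt (le_max_left _ _) hk
    have hτ0 : 0 < τ k ω := lt_of_le_of_lt (le_max_right _ _) hk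
    have hagree : hitT (fun t => M k t ω) a T = hitT (fun t => X t ω) a T := by
      unfold hitT
      congr 1
      ext s
      simp only [Set.mem_union, Set.mem_setOf_eq, Set.mem_singleton_iff]
      constructor
      · rintro (⟨h1, h2, h3⟩ | h) 
        · refine Or.inl ⟨h1, h2, ?_⟩
          have heq : M k s ω = X (min s (τ k ω)) ω := sp_eq X (τ k) s ω
          rwa [heq, min_eq_left (h2.trans hτT.le)] at h3
        · exact Or.inr h
      · rintro (⟨h1, h2, h3⟩ | h)
        · refine Or.inl ⟨h1, h2, ?_⟩
          have heq : M k s ω = X (min s (τ k ω)) ω := sp_eq X (τ k) s ω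
          rwa [heq, min_eq_left (h2.trans hτT.le)]
        · exact Or.inr h
    have hmem : ω ∈ B k := hτ0
    rw [hV]
    simp only [hW, Set.indicator_of_mem hmem, hagree]
    have hρT : hitT (fun t => X t ω) a T ≤ T := hitTAux.hitT_le_T hT.le
    rw [show M k (hitT (fun t => X t ω) a T) ω
      = X (min (hitT (fun t => X t ω) a T) (τ k ω)) ω from sp_eq X (τ k) _ ω]
    show X (hitT (fun t => X t ω) a T) ω
      = X (min (hitT (fun t => X t ω) a T) (τ k ω)) ω
    rw [min_eq_left (hρT.trans hτT.le)]
  have hVmeas : AEStronglyMeasurable V μ :=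
    aestronglyMeasurable_of_tendsto_ae atTop (fun k => (hWkey k).1) hconv
  -- domination: |W k| ≤ a a.e.
  have hWbdd : ∀ k, ∀ᵐ ω ∂μ, ‖W k ω‖ ≤ a := by
    intro k
    filter_upwards [hcont, h0, hnn] with ω hc h0' hnn'
    by_cases hmem : ω ∈ B k
    · have hτpos : 0 < τ k ω := hmem
      simp only [hW, Set.indicator_of_mem hmem]
      rw [Real.norm_eq_abs, abs_le]
      constructor
      · have h1 := hnn' (min (hitT (fun t => M k t ω) a T) (τ k ω))
        have heq : M k (hitT (fun t => M k t ω) a T) ω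
            = X (min (hitT (fun t => M k t ω) a T) (τ k ω)) ω := sp_eq X (τ k) _ ω
        rw [heq]
        linarith
      · refine hitTAux.apply_hitT_le (f := fun t => M k t ω) ?_ ?_ hT.le
        · rw [show (fun t => M k t ω) = fun t => X (min t (τ k ω)) ω from
            funext fun t => sp_eq X (τ k) t ω]
          exact hc.comp (continuous_id.min continuous_const)
        · show M k 0 ω < a
          have heq : M k 0 ω = X 0 ω := by
            rw [show M k 0 ω = X (min 0 (τ k ω)) ω from sp_eq X (τ k) 0 ω, min_eq_left hτpos.le]
          rw [heq, h0']
          exact hxa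
    · simp only [hW, Set.indicator_of_notMem hmem, norm_zero]
      exact ha.le
  -- μ (B k) → 1
  have hBtend : Tendsto (fun k => (μ (B k)).toReal) atTop (𝓝 1) := by
    have hrep : ∀ k, (μ (B k)).toReal = ∫ ω, (B k).indicator (fun _ => (1:ℝ)) ω ∂μ := by
      intro k
      rw [integral_indicator_const (1:ℝ) (hBm k), smul_eq_mul, mul_one, measureReal_def]
    have hlim : Tendsto (fun k => ∫ ω, (B k).indicator (fun _ => (1:ℝ)) ω ∂μ) atTop
        (𝓝 (∫ _ : Ω, (1:ℝ) ∂μ)) := by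
      refine tendsto_integral_of_dominated_convergence (fun _ => (1:ℝ))
        (fun k => ?_) (integrable_const _) (fun k => ?_) ?_
      · exact (aestronglyMeasurable_const).indicator (hBm k)
      · refine Filter.Eventually.of_forall fun ω => ?_
        by_cases hmem : ω ∈ B k <;>
          simp [Set.indicator_of_mem, Set.indicator_of_notMem, hmem]
      · filter_upwards [htend] with ω hω
        refine Tendsto.congr' ?_ (tendsto_const_nhds (x := (1:ℝ)))
        filter_upwards [hω.eventually (eventually_gt_atTop 0)] with k hk
        rw [Set.indicator_of_mem (by exact hk : ω ∈ B k)]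
    rw [show (1:ℝ) = ∫ _ : Ω, (1:ℝ) ∂μ by simp]
    exact hlim.congr fun k => (hrep k).symm
  -- conclude by dominated convergence over k
  have hWint : Tendsto (fun k => ∫ ω, W k ω ∂μ) atTop (𝓝 (∫ ω, V ω ∂μ)) := by
    refine tendsto_integral_of_dominated_convergence (fun _ => a)
      (fun k => (hWkey k).1) (integrable_const _) hWbdd hconv
  have hWlim : Tendsto (fun k => ∫ ω, W k ω ∂μ) atTop (𝓝 x) := by
    have : Tendsto (fun k => (μ (B k)).toReal * x) atTop (𝓝 (1 * x)) :=
      hBtend.mul_const x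
    rw [one_mul] at this
    refine this.congr fun k => ?_
    rw [← hBint k, ← (hWkey k).2]
  exact ⟨hVmeas, tendsto_nhds_unique hWint hWlim⟩

end Key3


/-- Cox-Hobson: a strict local martingale satisfies
`limsup_n n · P(sup_{t ∈ [0,T]} X_t > n) > 0`. -/
theorem strict_local_martingale_sup_tail
    {Ω : Type*} {mΩ : MeasurableSpace Ω} (μ : Measure Ω) [IsProbabilityMeasure μ]
    (ℱ : Filtration ℝ mΩ) (X : ℝ → Ω → ℝ) (x : ℝ) (hx : 0 < x)
    (hloc : IsLocalMartingale μ ℱ X)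
    (hnn : ∀ᵐ ω ∂μ, ∀ t : ℝ, 0 ≤ X t ω)
    (hcont : ∀ᵐ ω ∂μ, Continuous fun t => X t ω)
    (h0 : ∀ᵐ ω ∂μ, X 0 ω = x)
    (T : ℝ) (hT : 0 < T)
    (hstrict : (∫ ω, X T ω ∂μ) < x) :
    0 < Filter.atTop.limsup (fun n : ℕ =>
      (n : ℝ) * (μ {ω | (n : ℝ) < ⨆ t ∈ Set.Icc (0:ℝ) T, X t ω}).toReal) := by
  classical
  obtain ⟨τ, hstop, htend, hmart⟩ := hloc
  -- the hitting events
  set H : ℕ → Set Ω := fun n => {ω | ∃ t, 0 ≤ t ∧ t ≤ T ∧ (n : ℝ) < X t ω} with hHdef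
  have hHanti : ∀ {i j : ℕ}, i ≤ j → H j ⊆ H i := by
    intro i j hij ω hω
    obtain ⟨t, h1, h2, h3⟩ := hω
    exact ⟨t, h1, h2, lt_of_le_of_lt (by exact_mod_cast hij) h3⟩
  -- identification of the sup event with the hitting event
  have hGH : ∀ n : ℕ, μ {ω | (n : ℝ) < ⨆ t ∈ Set.Icc (0:ℝ) T, X t ω} = μ (H n) := by
    intro n
    refine measure_congr ?_
    rw [Filter.eventuallyEq_set]
    filter_upwards [hcont] with ω hc
    constructor
    · intro hlt
      by_contra hnex
      rw [hHdef, Set.mem_setOf_eq] at hnex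
      push_neg at hnex
      have hle : (⨆ t ∈ Set.Icc (0:ℝ) T, X t ω) ≤ n := by
        refine ciSup_le fun t => ?_
        show (⨆ (_ : t ∈ Set.Icc (0:ℝ) T), X t ω) ≤ (n:ℝ)
        by_cases ht : t ∈ Set.Icc (0:ℝ) T
        · rw [ciSup_pos ht]
          exact hnex t ht.1 ht.2
        · haveI : IsEmpty (t ∈ Set.Icc (0:ℝ) T) := ⟨fun h => ht h⟩
          rw [Real.iSup_of_isEmpty]
          exact Nat.cast_nonneg n
      exact absurd hlt (not_lt.2 hle)
    · intro hmem
      rw [hHdef, Set.mem_setOf_eq] at hmem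
      obtain ⟨t₀, ht0, htT, hXt⟩ := hmem
      obtain ⟨C, hC⟩ := (isCompact_Icc (a := (0:ℝ)) (b := T)).exists_bound_of_continuousOn
        hc.continuousOn
      have hbdd : BddAbove (Set.range fun t => ⨆ (_ : t ∈ Set.Icc (0:ℝ) T), X t ω) := by
        refine ⟨max C 0, ?_⟩
        rintro y ⟨t, rfl⟩
        show (⨆ (_ : t ∈ Set.Icc (0:ℝ) T), X t ω) ≤ max C 0
        by_cases ht : t ∈ Set.Icc (0:ℝ) T
        · rw [ciSup_pos ht]
          exact le_trans (le_trans (le_abs_self _) (hC t ht)) (le_max_left _ _)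
        · haveI : IsEmpty (t ∈ Set.Icc (0:ℝ) T) := ⟨fun h => ht h⟩
          rw [Real.iSup_of_isEmpty]
          exact le_max_right _ _
      show (n:ℝ) < ⨆ t ∈ Set.Icc (0:ℝ) T, X t ω
      calc (n:ℝ) < X t₀ ω := hXt
      _ = ⨆ (_ : t₀ ∈ Set.Icc (0:ℝ) T), X t₀ ω := (ciSup_pos (p := t₀ ∈ Set.Icc (0:ℝ) T) (f := fun _ => X t₀ ω) (Set.mem_Icc.mpr ⟨ht0, htT⟩)).symm
      _ ≤ ⨆ t ∈ Set.Icc (0:ℝ) T, X t ω := le_ciSup hbdd t₀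
  -- a.e. measurability of marginals
  have hXaem : ∀ s : ℝ, AEMeasurable (X s) μ := by
    intro s
    refine aemeasurable_of_tendsto_metrizable_ae'
      (f := fun k => MeasureTheory.stoppedProcess X (fun ω => (τ k ω : WithTop ℝ)) s) (fun k => ?_) ?_
    · exact (Measurable.mono ((hmart k).stronglyAdapted s).measurable (ℱ.le s) le_rfl).aemeasurable
    · filter_upwards [htend] with ω hω
      refine Tendsto.congr' ?_ (tendsto_const_nhds (x := X s ω))
      filter_upwards [hω.eventually (eventually_ge_atTop s)] with k hk
      show X s ω = MeasureTheory.stoppedProcess X (fun ω => (τ k ω : WithTop ℝ)) s ω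
      rw [sp_eq]
      rw [min_eq_left hk]
  have hXTaesm : AEStronglyMeasurable (X T) μ := (hXaem T).aestronglyMeasurable
  -- base index
  set n₀ : ℕ := ⌊x⌋₊ + 1 with hn₀
  have hxn : ∀ n : ℕ, x < ((n₀ + n : ℕ) : ℝ) := by
    intro n
    have h1 : x < (n₀ : ℝ) := by
      rw [hn₀]
      push_cast
      exact Nat.lt_floor_add_one x
    have h2 : (n₀ : ℝ) ≤ ((n₀ + n : ℕ) : ℝ) := by
      push_cast; linarith [Nat.cast_nonneg (α := ℝ) n]
    linarith
  -- H n is a.e. equal to a rational version, hence null measurable (for n > x)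
  have hHnull : ∀ n : ℕ, x < (n : ℝ) → NullMeasurableSet (H n) μ := by
    intro n hn
    set HQ : Set Ω := ⋃ (q : ℚ) (_ : 0 ≤ (q:ℝ) ∧ (q:ℝ) ≤ T), {ω | (n:ℝ) < X q ω} with hHQ
    have hae : HQ =ᵐ[μ] H n := by
      rw [Filter.eventuallyEq_set]
      filter_upwards [hcont, h0] with ω hc h0'
      constructor
      · intro hmem
        simp only [hHQ, Set.mem_iUnion] at hmem
        obtain ⟨q, hq, hq2⟩ := hmem
        exact ⟨q, hq.1, hq.2, hq2⟩
      · rintro ⟨t, h1, h2, h3⟩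
        have hf0 : X 0 ω < (n:ℝ) := by rw [h0']; exact hn
        obtain ⟨q, hq1, hq2, hq3⟩ := hitTAux.exists_rat_witness hc hf0 h1 h2 h3
        simp only [hHQ, Set.mem_iUnion]
        exact ⟨q, ⟨hq1, hq2⟩, hq3⟩
    have hHQnull : NullMeasurableSet HQ μ := by
      refine NullMeasurableSet.iUnion fun q => NullMeasurableSet.iUnion fun hq => ?_
      have : {ω | (n:ℝ) < X q ω} = (X (q:ℝ)) ⁻¹' (Set.Ioi (n:ℝ)) := rfl
      rw [this]
      exact (hXaem (q:ℝ)).nullMeasurable measurableSet_Ioi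
    exact hHQnull.congr hae
  -- monotone measurable exhaustion K n ≈ (H (n₀ + n))ᶜ
  set K : ℕ → Set Ω := fun n => ⋃ j ∈ Finset.range (n + 1), toMeasurable μ ((H (n₀ + j))ᶜ)
    with hKdef
  have hKmeas : ∀ n, MeasurableSet (K n) := by
    intro n
    exact MeasurableSet.biUnion (Finset.range (n+1)).countable_toSet
      fun j _ => measurableSet_toMeasurable μ _
  have hKmono : Monotone K := by
    intro i j hij
    refine Set.iUnion_mono fun l => ?_
    refine Set.iUnion_mono' fun hl => ?_
    exact ⟨by simp only [Finset.mem_range] at hl ⊢; omega, subset_rfl⟩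
  have hKae : ∀ n, K n =ᵐ[μ] (H (n₀ + n))ᶜ := by
    intro n
    have h1 : ∀ j, toMeasurable μ ((H (n₀ + j))ᶜ) =ᵐ[μ] (H (n₀ + j))ᶜ := fun j =>
      NullMeasurableSet.toMeasurable_ae_eq ((hHnull (n₀ + j) (hxn j)).compl)
    have h2 : (⋃ j ∈ Finset.range (n + 1), ((H (n₀ + j))ᶜ : Set Ω)) = (H (n₀ + n))ᶜ := by
      apply Set.Subset.antisymm
      · refine Set.iUnion₂_subset fun j hj => ?_
        rw [Finset.mem_range] at hj
        exact Set.compl_subset_compl.2 (hHanti (by omega))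
      · refine Set.subset_iUnion₂_of_subset n (by simp) subset_rfl
    have hfirst : K n =ᵐ[μ] ⋃ j ∈ Finset.range (n + 1), ((H (n₀ + j))ᶜ : Set Ω) := by
          rw [Filter.eventuallyEq_set]
          have hall : ∀ᵐ ω ∂μ, ∀ j : ℕ,
              (ω ∈ toMeasurable μ ((H (n₀ + j))ᶜ) ↔ ω ∈ (H (n₀ + j))ᶜ) := by
            rw [MeasureTheory.ae_all_iff]
            intro j
            have := h1 j
            exact Filter.EventuallyEq.mem_iff this
          filter_upwards [hall] with ω hω
          simp only [Set.mem_iUnion, hKdef]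
          constructor
          · rintro ⟨j, hj, hmem⟩
            exact ⟨j, hj, (hω j).1 hmem⟩
          · rintro ⟨j, hj, hmem⟩
            exact ⟨j, hj, (hω j).2 hmem⟩
    rw [h2] at hfirst
    exact hfirst
  -- a.e. the K n eventually cover
  have hKcover : ∀ᵐ ω ∂μ, ∃ n, ω ∈ K n := by
    have hall : ∀ᵐ ω ∂μ, ∀ j : ℕ,
        (ω ∈ toMeasurable μ ((H (n₀ + j))ᶜ) ↔ ω ∈ (H (n₀ + j))ᶜ) := by
      rw [MeasureTheory.ae_all_iff]
      intro j
      have := NullMeasurableSet.toMeasurable_ae_eq ((hHnull (n₀ + j) (hxn j)).compl)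
      replace this := Filter.EventuallyEq.mem_iff this
      exact this
    filter_upwards [hcont, hall] with ω hc hω
    obtain ⟨C, hC⟩ := (isCompact_Icc (a := (0:ℝ)) (b := T)).exists_bound_of_continuousOn
      hc.continuousOn
    obtain ⟨n, hn⟩ := exists_nat_ge (max C 0)
    refine ⟨n, ?_⟩
    have hnotH : ω ∈ (H (n₀ + n))ᶜ := by
      intro hmem
      obtain ⟨t, h1, h2, h3⟩ := hmem
      have : X t ω ≤ C := le_trans (le_abs_self _) (hC t ⟨h1, h2⟩)
      have hCn : C ≤ ((n₀ + n : ℕ) : ℝ) := by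
        have : (n : ℝ) ≤ ((n₀ + n : ℕ) : ℝ) := by push_cast; linarith [Nat.cast_nonneg (α := ℝ) n₀]
        linarith [le_trans (le_max_left C 0) hn]
      linarith
    have hmem2 : ω ∈ toMeasurable μ ((H (n₀ + n))ᶜ) := (hω n).2 hnotH
    simp only [hKdef, Set.mem_iUnion]
    exact ⟨n, by simp, hmem2⟩
  -- the key identities
  have hkey : ∀ n : ℕ,
      AEStronglyMeasurable (fun ω => X (hitT (fun t => X t ω) ((n₀ + n : ℕ) : ℝ) T) ω) μ ∧
      ∫ ω, X (hitT (fun t => X t ω) ((n₀ + n : ℕ) : ℝ) T) ω ∂μ = x := fun n =>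
    integral_hit_eq X τ hstop htend hmart hnn hcont h0 hx (hxn n) hT
  -- the a.e. splitting of the stopped value
  have hsplit : ∀ n : ℕ, (fun ω => X (hitT (fun t => X t ω) ((n₀ + n : ℕ) : ℝ) T) ω)
      =ᵐ[μ] fun ω => (K n).indicator (X T) ω
        + ((K n)ᶜ).indicator (fun _ => ((n₀ + n : ℕ) : ℝ)) ω := by
    intro n
    have hiff := (hKae n)
    replace hiff := Filter.EventuallyEq.mem_iff hiff
    filter_upwards [hcont, h0, hiff] with ω hc h0' hiffω
    have hf0 : X 0 ω < ((n₀ + n : ℕ) : ℝ) := by rw [h0']; exact hxn n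
    by_cases hmem : ω ∈ H (n₀ + n)
    · have hKnot : ω ∉ K n := fun hK => (hiffω.1 hK) hmem
      rw [Set.indicator_of_notMem hKnot, Set.indicator_of_mem (Set.mem_compl hKnot)]
      rw [hitTAux.apply_hitT_eq hc hf0 hT.le hmem]
      ring
    · have hKmem : ω ∈ K n := hiffω.2 hmem
      rw [Set.indicator_of_mem hKmem, Set.indicator_of_notMem (by simpa using hKmem)]
      have : hitT (fun t => X t ω) ((n₀ + n : ℕ) : ℝ) T = T :=
        hitTAux.hitT_eq_T_of_not_exists hmem
      rw [this]
      ring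
  -- integrability of the indicator pieces
  have hIndInt : ∀ n : ℕ, Integrable ((K n).indicator (X T)) μ := by
    intro n
    refine ⟨hXTaesm.indicator (hKmeas n), ?_⟩
    refine HasFiniteIntegral.of_bounded (C := ((n₀ + n : ℕ) : ℝ)) ?_
    have hiff := (hKae n)
    replace hiff := Filter.EventuallyEq.mem_iff hiff
    filter_upwards [hiff, hnn] with ω hiffω hnnω
    by_cases hmem : ω ∈ K n
    · rw [Set.indicator_of_mem hmem, Real.norm_eq_abs, abs_of_nonneg (hnnω T)]
      have hnot : ω ∉ H (n₀ + n) := hiffω.1 hmem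
      by_contra hgt
      push_neg at hgt
      exact hnot ⟨T, hT.le, le_refl T, hgt⟩
    · rw [Set.indicator_of_notMem hmem, norm_zero]
      exact Nat.cast_nonneg _
  -- main identity for each n
  have hid : ∀ n : ℕ, ((n₀ + n : ℕ) : ℝ) * (μ (H (n₀ + n))).toReal
      = x - ∫ ω, (K n).indicator (X T) ω ∂μ := by
    intro n
    have hint2 : Integrable (((K n)ᶜ).indicator (fun _ => ((n₀ + n : ℕ) : ℝ))) μ :=
      (integrable_const _).indicator (hKmeas n).compl
    have hx_eq : x = ∫ ω, (K n).indicator (X T) ω ∂μ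
        + ∫ ω, ((K n)ᶜ).indicator (fun _ => ((n₀ + n : ℕ) : ℝ)) ω ∂μ := by
      rw [← integral_add (hIndInt n) hint2]
      rw [← (hkey n).2]
      exact integral_congr_ae (hsplit n)
    have hμ : μ ((K n)ᶜ) = μ (H (n₀ + n)) := by
      refine measure_congr ?_
      have := (hKae n)
      replace this := Filter.EventuallyEq.mem_iff this
      rw [Filter.eventuallyEq_set]
      filter_upwards [this] with ω hω
      simp only [Set.mem_compl_iff]
      constructor
      · intro h
        by_contra hq
        exact h (hω.2 hq)
      · intro h hK
        exact (hω.1 hK) h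
    have hconst : ∫ ω, ((K n)ᶜ).indicator (fun _ => ((n₀ + n : ℕ) : ℝ)) ω ∂μ
        = (μ (H (n₀ + n))).toReal * ((n₀ + n : ℕ) : ℝ) := by
      rw [integral_indicator_const _ (hKmeas n).compl, measureReal_def, hμ, smul_eq_mul]
    rw [hx_eq, hconst]
    ring
  -- integrability of X T
  set Y : Ω → ℝ := fun ω => max ((hXaem T).mk (X T) ω) 0 with hY
  have hYmeas : Measurable Y := ((hXaem T).measurable_mk).max measurable_const
  have hYae : Y =ᵐ[μ] X T := by
    filter_upwards [(hXaem T).ae_eq_mk, hnn] with ω h1 h2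
    rw [hY]
    simp only [← h1]
    exact max_eq_left (h2 T)
  have hYnn : ∀ ω, 0 ≤ Y ω := fun ω => le_max_right _ _
  have hXTint : Integrable (X T) μ := by
    have hIOn : ∀ n, IntegrableOn Y (K n) μ := by
      intro n
      have h1 : IntegrableOn (X T) (K n) μ := (integrable_indicator_iff (hKmeas n)).1 (hIndInt n)
      exact h1.congr (ae_restrict_of_ae hYae.symm)
    have hlin : ∀ n, ∫⁻ ω, (K n).indicator (fun ω' => ENNReal.ofReal (Y ω')) ω ∂μ
        ≤ ENNReal.ofReal x := by
      intro n
      rw [lintegral_indicator (hKmeas n)]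
      rw [← ofReal_integral_eq_lintegral_ofReal (hIOn n)
        (Filter.Eventually.of_forall fun ω => hYnn ω)]
      refine ENNReal.ofReal_le_ofReal ?_
      have h1 : ∫ ω in K n, Y ω ∂μ = ∫ ω in K n, X T ω ∂μ :=
        integral_congr_ae (ae_restrict_of_ae hYae)
      have h2 : ∫ ω in K n, X T ω ∂μ = ∫ ω, (K n).indicator (X T) ω ∂μ :=
        (integral_indicator (hKmeas n)).symm
      have h3 := hid n
      have h4 : 0 ≤ ((n₀ + n : ℕ) : ℝ) * (μ (H (n₀ + n))).toReal :=
        mul_nonneg (Nat.cast_nonneg _) ENNReal.toReal_nonneg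
      rw [h1, h2]
      linarith
    have hsup : ∫⁻ ω, ENNReal.ofReal (Y ω) ∂μ ≤ ENNReal.ofReal x := by
      have hmono' : Monotone (fun n => (K n).indicator (fun ω' => ENNReal.ofReal (Y ω'))) := by
        intro i j hij
        refine fun ω => ?_
        dsimp only
        by_cases hmem : ω ∈ K i
        · rw [Set.indicator_of_mem hmem, Set.indicator_of_mem (hKmono hij hmem)]
        · rw [Set.indicator_of_notMem hmem]
          exact zero_le
      have heq : ∫⁻ ω, ENNReal.ofReal (Y ω) ∂μ
          = ∫⁻ ω, ⨆ n, (K n).indicator (fun ω' => ENNReal.ofReal (Y ω')) ω ∂μ := by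
        refine lintegral_congr_ae ?_
        filter_upwards [hKcover] with ω hω
        obtain ⟨n₁, hn₁⟩ := hω
        refine le_antisymm ?_ ?_
        · refine le_trans (le_of_eq ?_) (le_iSup _ n₁)
          rw [Set.indicator_of_mem hn₁]
        · refine iSup_le fun n => ?_
          exact Set.indicator_le_self _ _ ω
      rw [heq, lintegral_iSup (fun n => (hYmeas.ennreal_ofReal).indicator (hKmeas n)) hmono']
      exact iSup_le hlin
    have hfin : HasFiniteIntegral Y μ := by
      rw [hasFiniteIntegral_iff_norm]
      have : ∀ ω, ENNReal.ofReal ‖Y ω‖ = ENNReal.ofReal (Y ω) := fun ω => by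
        rw [Real.norm_of_nonneg (hYnn ω)]
      simp_rw [this]
      exact lt_of_le_of_lt hsup ENNReal.ofReal_lt_top
    have hYint : Integrable Y μ := ⟨hYmeas.aestronglyMeasurable, hfin⟩
    exact hYint.congr hYae
  -- limit of indicator integrals
  have hs1 : Tendsto (fun n => ∫ ω, (K n).indicator (X T) ω ∂μ) atTop (𝓝 (∫ ω, X T ω ∂μ)) := by
    refine tendsto_integral_of_dominated_convergence (fun ω => |X T ω|)
      (fun n => (hIndInt n).aestronglyMeasurable) hXTint.abs ?_ ?_
    · intro n
      refine Filter.Eventually.of_forall fun ω => ?_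
      by_cases hmem : ω ∈ K n
      · rw [Set.indicator_of_mem hmem, Real.norm_eq_abs]
      · rw [Set.indicator_of_notMem hmem, norm_zero]
        exact abs_nonneg _
    · filter_upwards [hKcover] with ω hω
      obtain ⟨n₁, hn₁⟩ := hω
      refine Tendsto.congr' ?_ (tendsto_const_nhds (x := X T ω))
      filter_upwards [Filter.eventually_ge_atTop n₁] with n hn
      rw [Set.indicator_of_mem (hKmono hn hn₁)]
  -- final limit
  set δ : ℝ := x - ∫ ω, X T ω ∂μ with hδdef
  have hδpos : 0 < δ := sub_pos.2 hstrict
  have htendShift : Tendsto (fun n : ℕ => ((n₀ + n : ℕ) : ℝ) * (μ (H (n₀ + n))).toReal)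
      atTop (𝓝 δ) := by
    have h1 : Tendsto (fun n : ℕ => x - ∫ ω, (K n).indicator (X T) ω ∂μ) atTop (𝓝 δ) :=
      tendsto_const_nhds.sub hs1
    exact h1.congr fun n => (hid n).symm
  set f : ℕ → ℝ := fun n => (n : ℝ) * (μ (H n)).toReal with hfdef
  have hf : Tendsto f atTop (𝓝 δ) := by
    rw [← Filter.tendsto_add_atTop_iff_nat (f := f) n₀]
    refine htendShift.congr fun n => ?_
    rw [hfdef]
    congr 2 <;> rw [Nat.add_comm n₀ n]
  have hgoal_eq : (fun n : ℕ => (n : ℝ) * (μ {ω | (n : ℝ) < ⨆ t ∈ Set.Icc (0:ℝ) T, X t ω}).toReal)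
      = f := by
    funext n
    rw [hfdef, hGH n]
  rw [hgoal_eq, hf.limsup_eq]
  exact hδpos
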